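/- Every MAD family of size strictly less than the dominating number 𝔡 is +-Ramsey. -/

import Mathlib

/-- The restriction `f↾n` of `f : ω → ω`, as a finite sequence. -/
def res (f : ℕ → ℕ) (n : ℕ) : List ℕ := (List.range n).map f

/-- A tree on `ω`: a set of finite sequences closed under initial segments. -/
def IsTree (T : Set (List ℕ)) : Prop := ∀ s ∈ T, ∀ t, t <+: s → t ∈ T

/-- The successor set `suc_T(s) = {n : s⌢n ∈ T}`. -/
def sucT (T : Set (List ℕ)) (s : List ℕ) : Set ℕ := {n | s ++ [n] ∈ T}

/-- `f ∈ [T]` is a branch of `T`. -/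
def IsBranch (T : Set (List ℕ)) (f : ℕ → ℕ) : Prop := ∀ n, res f n ∈ T

/-- An almost disjoint family: infinite sets with pairwise finite intersections. -/
def IsADF (𝒜 : Set (Set ℕ)) : Prop :=
  (∀ A ∈ 𝒜, A.Infinite) ∧ ∀ A ∈ 𝒜, ∀ B ∈ 𝒜, A ≠ B → (A ∩ B).Finite

/-- A maximal almost disjoint family. -/
def IsMAD (𝒜 : Set (Set ℕ)) : Prop :=
  IsADF 𝒜 ∧ ∀ X : Set ℕ, X.Infinite → ∃ A ∈ 𝒜, (X ∩ A).Infinite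

/-- `X ∈ I(𝒜)`: the ideal generated by `𝒜` together with the finite sets. -/
def InIdeal (𝒜 : Set (Set ℕ)) (X : Set ℕ) : Prop :=
  ∃ F : Finset (Set ℕ), ↑F ⊆ 𝒜 ∧ (X \ ⋃ A ∈ F, A).Finite

/-- `X` is `I(𝒜)`-positive. -/
def Positive (𝒜 : Set (Set ℕ)) (X : Set ℕ) : Prop := ¬ InIdeal 𝒜 X

/-- `𝒜` is `+`-Ramsey: every tree all of whose successor sets are `I(𝒜)`-positive
has a branch whose range is `I(𝒜)`-positive. -/
def PlusRamsey (𝒜 : Set (Set ℕ)) : Prop :=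
  ∀ T : Set (List ℕ), [] ∈ T → IsTree T → (∀ s ∈ T, Positive 𝒜 (sucT T s)) →
    ∃ f : ℕ → ℕ, IsBranch T f ∧ Positive 𝒜 (Set.range f)

open Cardinal in
/-- The dominating number `𝔡`. -/
noncomputable def dNum : Cardinal :=
  sInf {c | ∃ D : Set (ℕ → ℕ), Cardinal.mk ↥D = c ∧
    ∀ f : ℕ → ℕ, ∃ g ∈ D, {n | g n < f n}.Finite}

def monoUp (u : ℕ → ℕ) (x : ℕ) : ℕ := Finset.sup (Finset.range (x + 1)) u

lemma le_monoUp (u : ℕ → ℕ) (x : ℕ) : u x ≤ monoUp u x :=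
  Finset.le_sup (by simp)

lemma monoUp_mono (u : ℕ → ℕ) : Monotone (monoUp u) := fun a b h =>
  Finset.sup_mono (Finset.range_subset_range.2 (by omega))

lemma listBound_finite (M : ℕ) : {l : List ℕ | l.length ≤ M ∧ ∀ x ∈ l, x ≤ M}.Finite := by
  have h1 : {l : List (Fin (M + 1)) | l.length ≤ M}.Finite := List.finite_length_le _ M
  have h2 := h1.image (List.map (Fin.val))
  apply h2.subset
  rintro l ⟨hlen, hmem⟩
  refine ⟨l.map (fun x => (⟨min x M, by omega⟩ : Fin (M + 1))), by simpa using hlen, ?_⟩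
  rw [List.map_map]
  conv_rhs => rw [← List.map_id l]
  apply List.map_congr_left
  intro a ha
  simp [Nat.min_eq_left (hmem a ha)]

/-- Every MAD family of size less than `𝔡` is `+`-Ramsey. -/
theorem stmt4 (𝒜 : Set (Set ℕ)) (hmad : IsMAD 𝒜)
    (hsize : Cardinal.mk ↥𝒜 < dNum) : PlusRamsey 𝒜 := by
  classical
  intro T hroot _htree hposS
  -- Successor sets are infinite
  have hsucInf : ∀ s ∈ T, (sucT T s).Infinite := by
    intro s hs
    intro hfin
    exact hposS s hs ⟨∅, by simp, by simpa using hfin⟩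
  -- At every node, infinitely many members of 𝒜 are "active"
  have hActive : ∀ s ∈ T, {A | A ∈ 𝒜 ∧ (A ∩ sucT T s).Infinite}.Infinite := by
    intro s hs
    by_contra hfin
    rw [Set.not_infinite] at hfin
    apply hposS s hs
    refine ⟨hfin.toFinset, ?_, ?_⟩
    · intro A hA
      rw [Set.Finite.coe_toFinset] at hA
      exact hA.1
    · by_contra hXinf
      obtain ⟨A, hA, hAX⟩ := hmad.2 _ hXinf
      have hmem : A ∈ {A | A ∈ 𝒜 ∧ (A ∩ sucT T s).Infinite} := by
        refine ⟨hA, hAX.mono ?_⟩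
        rintro x ⟨⟨h1, _⟩, h2⟩
        exact ⟨h2, h1⟩
      obtain ⟨x, hx⟩ := hAX.nonempty
      apply hx.1.2
      simp only [Set.mem_iUnion]
      exact ⟨A, hfin.mem_toFinset.2 hmem, hx.2⟩
  have h𝒜inf : 𝒜.Infinite := (hActive [] hroot).mono (fun A hA => hA.1)
  -- Phase B : injective assignment of active sets to nodes
  have hpickEx : ∀ (n : ℕ) (prev : ℕ → Set ℕ), (∃ s ∈ T, Encodable.encode s = n) →
      ∀ s ∈ T, Encodable.encode s = n →
      ∃ A, (A ∈ 𝒜 ∧ (A ∩ sucT T s).Infinite) ∧ ∀ k < n, A ≠ prev k := by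
    intro n prev _ s hs _
    have hinf := (hActive s hs).diff ((Set.finite_Iio n).image prev)
    obtain ⟨A, hA⟩ := hinf.nonempty
    refine ⟨A, hA.1, ?_⟩
    intro k hk he
    exact hA.2 ⟨k, hk, he.symm⟩
  obtain ⟨pick, hpick_def⟩ : ∃ pick : ℕ → (ℕ → Set ℕ) → Set ℕ, ∀ n prev,
      pick n prev = if h : ∃ s ∈ T, Encodable.encode s = n then
        Classical.choose (hpickEx n prev h h.choose h.choose_spec.1 h.choose_spec.2)
      else ∅ := ⟨_, fun _ _ => rfl⟩
  have hpick : ∀ (n : ℕ) (prev : ℕ → Set ℕ), ∀ s ∈ T, Encodable.encode s = n →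
      (pick n prev ∈ 𝒜 ∧ (pick n prev ∩ sucT T s).Infinite) ∧ ∀ k < n, pick n prev ≠ prev k := by
    intro n prev s hs hn
    have h : ∃ s ∈ T, Encodable.encode s = n := ⟨s, hs, hn⟩
    have hcs : h.choose = s := Encodable.encode_injective (h.choose_spec.2.trans hn.symm)
    subst hcs
    rw [hpick_def n prev, dif_pos h]
    exact Classical.choose_spec (hpickEx n prev h h.choose h.choose_spec.1 h.choose_spec.2)
  obtain ⟨cum, hcumS⟩ : ∃ cum : ℕ → ℕ → Set ℕ,
      ∀ n, cum (n + 1) = fun k => if k = n then pick n (cum n) else cum n k :=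
    ⟨Nat.rec (fun _ => ∅) (fun n ih k => if k = n then pick n ih else ih k), fun n => rfl⟩
  have hstab : ∀ n k, k < n → cum n k = cum (k + 1) k := by
    intro n
    induction n with
    | zero => omega
    | succ n ih =>
      intro k hk
      by_cases h : k = n
      · subst h; rfl
      · have hkn : k < n := by omega
        rw [show cum (n + 1) k = if k = n then pick n (cum n) else cum n k from
          congrFun (hcumS n) k, if_neg h]
        exact ih k hkn
  set Achoice : List ℕ → Set ℕ := fun s => cum (Encodable.encode s + 1) (Encodable.encode s)
    with hAchoice_def
  have hAc : ∀ s ∈ T, (Achoice s ∈ 𝒜 ∧ (Achoice s ∩ sucT T s).Infinite) ∧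
      ∀ t ∈ T, Encodable.encode t < Encodable.encode s → Achoice t ≠ Achoice s := by
    intro s hs
    have he : Achoice s = pick (Encodable.encode s) (cum (Encodable.encode s)) := by
      exact (congrFun (hcumS (Encodable.encode s)) (Encodable.encode s)).trans (if_pos rfl)
    have hp := hpick (Encodable.encode s) (cum (Encodable.encode s)) s hs rfl
    refine ⟨he ▸ hp.1, ?_⟩
    intro t ht hlt heq
    have h1 : Achoice t = cum (Encodable.encode s) (Encodable.encode t) :=
      (hstab (Encodable.encode s) (Encodable.encode t) hlt).symm
    exact (hp.2 (Encodable.encode t) hlt) (by rw [← he, ← heq, h1])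
  -- Phase C : uniform bounds over finite sets of nodes
  have hNodesFin : ∀ M : ℕ, {s : List ℕ | s ∈ T ∧ s.length ≤ M ∧ ∀ x ∈ s, x ≤ M}.Finite :=
    fun M => (listBound_finite M).subset (fun s hs => ⟨hs.2.1, hs.2.2⟩)
  have hstepEx : ∀ M : ℕ, ∃ b, M < b ∧ ∀ s, s ∈ T → s.length ≤ M → (∀ x ∈ s, x ≤ M) →
      sInf {x | x ∈ Achoice s ∩ sucT T s ∧ M < x} ≤ b := by
    intro M
    obtain ⟨b, hb⟩ := ((hNodesFin M).image
      (fun s => sInf {x | x ∈ Achoice s ∩ sucT T s ∧ M < x})).bddAbove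
    refine ⟨max b M + 1, by omega, ?_⟩
    intro s h1 h2 h3
    have := hb (Set.mem_image_of_mem _ (show s ∈ {s : List ℕ | s ∈ T ∧ s.length ≤ M ∧
      ∀ x ∈ s, x ≤ M} from ⟨h1, h2, h3⟩))
    omega
  choose step hstep1 hstep2 using hstepEx
  have hphiEx : ∀ (p : {F : Finset (Set ℕ) // ↑F ⊆ 𝒜}) (M : ℕ), ∃ b, ∀ s, s ∈ T →
      s.length ≤ M → (∀ x ∈ s, x ≤ M) → Achoice s ∉ p.1 →
      ∀ x ∈ Achoice s ∩ ⋃ A ∈ p.1, A, x ≤ b := by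
    rintro ⟨F, hF⟩ M
    have hfinS : ∀ s, s ∈ T → Achoice s ∉ F → (Achoice s ∩ ⋃ A ∈ F, A).Finite := by
      intro s hs hnF
      rw [Set.inter_iUnion₂]
      apply Set.Finite.biUnion F.finite_toSet
      intro A hA
      exact hmad.1.2 _ (hAc s hs).1.1 _ (hF hA) (fun he => hnF (he ▸ hA))
    have hbig : (⋃ s ∈ {s : List ℕ | (s ∈ T ∧ s.length ≤ M ∧ ∀ x ∈ s, x ≤ M) ∧ Achoice s ∉ F},
        Achoice s ∩ ⋃ A ∈ F, A).Finite := by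
      apply Set.Finite.biUnion ((hNodesFin M).subset (fun s hs => hs.1))
      intro s hs
      exact hfinS s hs.1.1 hs.2
    obtain ⟨b, hb⟩ := hbig.bddAbove
    refine ⟨b, ?_⟩
    intro s h1 h2 h3 h4 x hx
    exact hb (Set.mem_biUnion (show s ∈ {s : List ℕ | (s ∈ T ∧ s.length ≤ M ∧ ∀ x ∈ s, x ≤ M) ∧
      Achoice s ∉ F} from ⟨⟨h1, h2, h3⟩, h4⟩) hx)
  choose φ hφ using hphiEx
  -- Phase D : apply `|𝒜| < 𝔡`
  set step' := monoUp step with hstep'def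
  set χ := fun (p : {F : Finset (Set ℕ) // ↑F ⊆ 𝒜}) => monoUp (fun x => φ p (step' x))
    with hχdef
  have hGex : ∃ G : ℕ → ℕ, ∀ p : {F : Finset (Set ℕ) // ↑F ⊆ 𝒜},
      {x | χ p (χ p x) < G x}.Infinite := by
    by_contra hno
    push_neg at hno
    have hdom : ∀ g : ℕ → ℕ, ∃ h ∈ Set.range
        (fun p : {F : Finset (Set ℕ) // ↑F ⊆ 𝒜} => fun x => χ p (χ p x)),
        {n | h n < g n}.Finite := by
      intro g
      obtain ⟨p, hp⟩ := hno g
      exact ⟨_, ⟨p, rfl⟩, hp⟩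
    have h1 : dNum ≤ Cardinal.mk ↥(Set.range
        (fun p : {F : Finset (Set ℕ) // ↑F ⊆ 𝒜} => fun x => χ p (χ p x))) :=
      csInf_le' ⟨_, rfl, hdom⟩
    have h2 : Cardinal.mk ↥(Set.range
        (fun p : {F : Finset (Set ℕ) // ↑F ⊆ 𝒜} => fun x => χ p (χ p x))) ≤
        Cardinal.mk {F : Finset (Set ℕ) // ↑F ⊆ 𝒜} := Cardinal.mk_range_le
    have hinj : Function.Injective
        (fun p : {F : Finset (Set ℕ) // ↑F ⊆ 𝒜} => p.1.subtype (· ∈ 𝒜)) := by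
      intro p q h
      simp only at h
      apply Subtype.ext
      ext A
      constructor
      · intro hA
        have h1 : (⟨A, p.2 hA⟩ : ↥𝒜) ∈ p.1.subtype (· ∈ 𝒜) := by
          simp [Finset.mem_subtype, hA]
        rw [h] at h1
        simpa [Finset.mem_subtype] using h1
      · intro hA
        have h1 : (⟨A, q.2 hA⟩ : ↥𝒜) ∈ q.1.subtype (· ∈ 𝒜) := by
          simp [Finset.mem_subtype, hA]
        rw [← h] at h1
        simpa [Finset.mem_subtype] using h1
    have h3 : Cardinal.mk {F : Finset (Set ℕ) // ↑F ⊆ 𝒜} ≤ Cardinal.mk (Finset ↥𝒜) :=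
      Cardinal.mk_le_of_injective hinj
    have h4 : Cardinal.mk (Finset ↥𝒜) = Cardinal.mk ↥𝒜 := by
      have := h𝒜inf.to_subtype
      exact Cardinal.mk_finset_of_infinite _
    exact absurd hsize (not_lt.2 (h1.trans (h2.trans (h3.trans_eq h4))))
  obtain ⟨G0, hG0⟩ := hGex
  set G := monoUp G0 with hGdef
  have hGbeats : ∀ p : {F : Finset (Set ℕ) // ↑F ⊆ 𝒜}, {x | χ p (χ p x) < G x}.Infinite :=
    fun p => (hG0 p).mono (fun x hx => lt_of_lt_of_le hx (le_monoUp G0 x))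
  -- Phase E : the master scale
  obtain ⟨mseq, hm0, hmS⟩ : ∃ m : ℕ → ℕ, m 0 = 0 ∧
      ∀ j, m (j + 1) = max (max (G (m j)) (step' (m j))) (max (m j) j) + 1 :=
    ⟨Nat.rec 0 (fun j mj => max (max (G mj) (step' mj)) (max mj j) + 1), rfl, fun j => rfl⟩
  have hmlt : ∀ j, mseq j < mseq (j + 1) := by intro j; rw [hmS]; omega
  have hmmono : Monotone mseq := (strictMono_nat_of_lt_succ hmlt).monotone
  have hmge : ∀ j, j ≤ mseq j := by
    intro j
    induction j with
    | zero => omega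
    | succ j ih => have := hmS j; omega
  have hGlt : ∀ j, G (mseq j) < mseq (j + 1) := by intro j; have := hmS j; omega
  have hsteplt : ∀ j, step' (mseq j) < mseq (j + 1) := by intro j; have := hmS j; omega
  have hχmono : ∀ p, Monotone (χ p) := fun p => by rw [hχdef]; exact monoUp_mono _
  have hχle : ∀ p x, φ p (step' x) ≤ χ p x := fun p x => by
    rw [hχdef]
    exact le_monoUp (fun y => φ p (step' y)) x
  have hGmono : Monotone G := by rw [hGdef]; exact monoUp_mono _
  -- Phase F : the branch
  obtain ⟨val, hval⟩ : ∃ v : ℕ → List ℕ → ℕ, ∀ n s,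
      v n s = sInf {x | x ∈ Achoice s ∩ sucT T s ∧ mseq n < x} := ⟨_, fun _ _ => rfl⟩
  obtain ⟨S, hS0, hSS⟩ : ∃ S : ℕ → List ℕ, S 0 = [] ∧ ∀ n, S (n + 1) = S n ++ [val n (S n)] :=
    ⟨Nat.rec [] (fun n s => s ++ [val n s]), rfl, fun n => rfl⟩
  obtain ⟨f, hfdef⟩ : ∃ f : ℕ → ℕ, ∀ n, f n = val n (S n) := ⟨_, fun _ => rfl⟩
  have hres : ∀ n, S n = res f n := by
    intro n
    induction n with
    | zero => rw [hS0]; simp [res]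
    | succ n ih => rw [hSS n, ← hfdef n, ih]; simp [res, List.range_succ]
  have hlen : ∀ n, (S n).length = n := fun n => by rw [hres]; simp [res]
  have hmem : ∀ n x, x ∈ S n → ∃ k, k < n ∧ x = f k := by
    intro n x hx
    rw [hres] at hx
    simp only [res, List.mem_map, List.mem_range] at hx
    obtain ⟨k, hk, he⟩ := hx
    exact ⟨k, hk, he.symm⟩
  -- the main invariant
  have hmain : ∀ n, S n ∈ T ∧ ∀ k, k < n →
      (f k ∈ Achoice (S k) ∧ f k ∈ sucT T (S k)) ∧ mseq k < f k ∧ f k ≤ step (mseq k) := by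
    intro n
    induction n with
    | zero => exact ⟨hS0 ▸ hroot, by omega⟩
    | succ n ih =>
      obtain ⟨hTn, hk⟩ := ih
      have hent : ∀ x ∈ S n, x ≤ mseq n := by
        intro x hx
        obtain ⟨k, hkn, rfl⟩ := hmem n x hx
        have h1 : f k ≤ step (mseq k) := (hk k hkn).2.2
        have h2 : step (mseq k) ≤ step' (mseq k) := by rw [hstep'def]; exact le_monoUp _ _
        have h3 : step' (mseq k) < mseq (k + 1) := hsteplt k
        have h4 : mseq (k + 1) ≤ mseq n := hmmono (by omega)
        omega
      have hlenn : (S n).length ≤ mseq n := by rw [hlen]; exact hmge n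
      have hne : {x | x ∈ Achoice (S n) ∩ sucT T (S n) ∧ mseq n < x}.Nonempty := by
        obtain ⟨b, hb, hlt⟩ := ((hAc (S n) hTn).1.2).exists_gt (mseq n)
        exact ⟨b, hb, hlt⟩
      have hfmem : f n ∈ {x | x ∈ Achoice (S n) ∩ sucT T (S n) ∧ mseq n < x} := by
        rw [hfdef, hval]
        exact Nat.sInf_mem hne
      have hfle : f n ≤ step (mseq n) := by
        rw [hfdef, hval]
        exact hstep2 (mseq n) (S n) hTn hlenn hent
      refine ⟨?_, ?_⟩
      · rw [hSS, ← hfdef n]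
        exact hfmem.1.2
      · intro k hkn
        rcases Nat.lt_succ_iff_lt_or_eq.1 hkn with h | h
        · exact hk k h
        · subst h
          exact ⟨⟨hfmem.1.1, hfmem.1.2⟩, hfmem.2, hfle⟩
  have hprop : ∀ k, (f k ∈ Achoice (S k) ∧ f k ∈ sucT T (S k)) ∧
      mseq k < f k ∧ f k ≤ step (mseq k) := fun k => (hmain (k + 1)).2 k (by omega)
  have hbranch : IsBranch T f := fun n => (hres n) ▸ (hmain n).1
  have hfstrict : StrictMono f := by
    apply strictMono_nat_of_lt_succ
    intro n
    have h1 : f n ≤ step (mseq n) := (hprop n).2.2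
    have h2 : step (mseq n) ≤ step' (mseq n) := by rw [hstep'def]; exact le_monoUp _ _
    have h3 : step' (mseq n) < mseq (n + 1) := hsteplt n
    have h4 : mseq (n + 1) < f (n + 1) := (hprop (n + 1)).2.1
    omega
  -- Phase G : the range of the branch is positive
  refine ⟨f, hbranch, ?_⟩
  rintro ⟨F, hF𝒜, hfin⟩
  set p : {F : Finset (Set ℕ) // ↑F ⊆ 𝒜} := ⟨F, hF𝒜⟩ with hpdef
  have hN : ∃ N, ∀ n, N ≤ n → f n ∈ ⋃ A ∈ F, A := by
    have hpre : {n | f n ∉ ⋃ A ∈ F, A}.Finite := by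
      have hsub : {n | f n ∉ ⋃ A ∈ F, A} ⊆ f ⁻¹' (Set.range f \ ⋃ A ∈ F, A) :=
        fun n hn => ⟨⟨n, rfl⟩, hn⟩
      exact (hfin.preimage hfstrict.injective.injOn).subset hsub
    obtain ⟨N, hNub⟩ := hpre.bddAbove
    refine ⟨N + 1, fun n hn => ?_⟩
    by_contra hc
    have := hNub hc
    omega
  obtain ⟨N, hNs⟩ := hN
  have hSne : ∀ a b : ℕ, a ≠ b → Achoice (S a) ≠ Achoice (S b) := by
    intro a b hab
    have hS : S a ≠ S b := fun h => hab (by rw [← hlen a, ← hlen b, h])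
    have hcode : Encodable.encode (S a) ≠ Encodable.encode (S b) :=
      fun h => hS (Encodable.encode_injective h)
    rcases lt_or_gt_of_ne hcode with h | h
    · exact (hAc (S b) (hmain b).1).2 (S a) (hmain a).1 h
    · exact fun he => (hAc (S a) (hmain a).1).2 (S b) (hmain b).1 h he.symm
  have hbadA : {n | Achoice (S n) ∈ (↑F : Set (Set ℕ))}.Finite := by
    have hinj2 : Function.Injective (fun n => Achoice (S n)) := by
      intro a b h
      by_contra hne
      exact hSne a b hne h
    exact F.finite_toSet.preimage hinj2.injOn
  obtain ⟨N2, hN2⟩ := hbadA.bddAbove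
  have hGood : ∀ i₀ : ℕ, ∃ j, i₀ ≤ j ∧ χ p (mseq j) < mseq (j + 1) := by
    intro i₀
    obtain ⟨x, hxB, hxgt⟩ := (hGbeats p).exists_gt (mseq i₀)
    have hjex : ∃ j, mseq j ≤ x ∧ x < mseq (j + 1) := by
      have hne : {j | x < mseq j}.Nonempty :=
        ⟨x + 1, show x < mseq (x + 1) from by have := hmge (x + 1); omega⟩
      have hj1mem : x < mseq (sInf {j | x < mseq j}) := Nat.sInf_mem hne
      have hj1ne : sInf {j | x < mseq j} ≠ 0 := by
        intro h
        rw [h, hm0] at hj1mem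
        omega
      obtain ⟨j, hj⟩ : ∃ j, sInf {j | x < mseq j} = j + 1 :=
        ⟨sInf {j | x < mseq j} - 1, by omega⟩
      rw [hj] at hj1mem
      have hjnot : ¬ x < mseq j := fun hc => by
        have := Nat.sInf_le (show j ∈ {j | x < mseq j} from hc)
        omega
      exact ⟨j, by omega, hj1mem⟩
    obtain ⟨j, hj1, hj2⟩ := hjex
    have hji : i₀ ≤ j := by
      by_contra hc
      have : mseq (j + 1) ≤ mseq i₀ := hmmono (by omega)
      omega
    by_cases hcase : χ p x < mseq (j + 1)
    · exact ⟨j, hji, lt_of_le_of_lt (hχmono p hj1) hcase⟩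
    · push_neg at hcase
      refine ⟨j + 1, by omega, ?_⟩
      calc χ p (mseq (j + 1)) ≤ χ p (χ p x) := hχmono p hcase
        _ < G x := hxB
        _ ≤ G (mseq (j + 1)) := hGmono (le_of_lt hj2)
        _ < mseq (j + 1 + 1) := hGlt (j + 1)
  obtain ⟨j, hji, hgood⟩ := hGood (max N (N2 + 1))
  have hn1 : N ≤ j + 1 := by omega
  have hfnU : f (j + 1) ∈ ⋃ A ∈ F, A := hNs (j + 1) hn1
  have hnotbad : Achoice (S (j + 1)) ∉ (↑F : Set (Set ℕ)) := by
    intro hc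
    have := hN2 hc
    omega
  have hTn : S (j + 1) ∈ T := (hmain (j + 1)).1
  have hlenb : (S (j + 1)).length ≤ step' (mseq j) := by
    rw [hlen]
    have h1 : step (mseq j) ≤ step' (mseq j) := by rw [hstep'def]; exact le_monoUp _ _
    have h2 := hstep1 (mseq j)
    have h3 := hmge j
    omega
  have hentb : ∀ x ∈ S (j + 1), x ≤ step' (mseq j) := by
    intro x hx
    obtain ⟨k, hkn, rfl⟩ := hmem (j + 1) x hx
    have h1 : f k ≤ step (mseq k) := (hprop k).2.2
    have h2 : step (mseq k) ≤ step' (mseq k) := by rw [hstep'def]; exact le_monoUp _ _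
    have h3 : step' (mseq k) ≤ step' (mseq j) := by
      rw [hstep'def]
      exact monoUp_mono step (hmmono (by omega))
    omega
  have hbound : f (j + 1) ≤ φ p (step' (mseq j)) :=
    hφ p (step' (mseq j)) (S (j + 1)) hTn hlenb hentb hnotbad (f (j + 1))
      ⟨(hprop (j + 1)).1.1, hfnU⟩
  have hchain : φ p (step' (mseq j)) ≤ χ p (mseq j) := hχle p (mseq j)
  have hlast : mseq (j + 1) < f (j + 1) := (hprop (j + 1)).2.1
  omega
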